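/- arXiv:2411.17143 — 4 statements merged into one kernel-verified Lean document; each statement's English description precedes it below -/
import Mathlib

section
/- Let k be an infinite field and n ≥ 2 an integer. Every normal subgroup N of SAut_k(A^n) that contains SL_n(k) (embedded as linear automorphisms) also contains every tame automorphism of Jacobian 1. -/
open MvPolynomial

/-- Endomorphisms of affine `n`-space over `R`: `n`-tuples of polynomials in
`R[x_1,…,x_n]`, with composition given by substitution. -/
def PolyEnd (R : Type*) [CommRing R] (n : ℕ) : Type _ := Fin n → MvPolynomial (Fin n) R

namespace PolyEnd

variable {R S : Type*} [CommRing R] [CommRing S] {n : ℕ}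

noncomputable instance : Monoid (PolyEnd R n) where
  one := fun i => X i
  mul f g := fun i => bind₁ g (f i)
  mul_assoc f g h := funext fun i => by
    show bind₁ h (bind₁ g (f i)) = bind₁ (fun j => bind₁ h (g j)) (f i)
    exact bind₁_bind₁ g h (f i)
  one_mul f := funext fun i => by
    show bind₁ f (X i) = f i
    exact bind₁_X_right f i
  mul_one f := funext fun i => by
    show bind₁ X (f i) = f i
    rw [bind₁_X_left, AlgHom.id_apply]

@[simp] lemma mul_apply (f g : PolyEnd R n) (i : Fin n) :
    (f * g) i = bind₁ g (f i) := rfl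

@[simp] lemma one_apply (i : Fin n) : (1 : PolyEnd R n) i = X i := rfl

/-- The Jacobian determinant of an endomorphism. -/
noncomputable def jac (f : PolyEnd R n) : MvPolynomial (Fin n) R :=
  (Matrix.of fun i j => pderiv j (f i)).det

/-- The chain rule for partial derivatives of a substitution. -/
lemma pderiv_bind₁ (g : Fin n → MvPolynomial (Fin n) R)
    (p : MvPolynomial (Fin n) R) (j : Fin n) :
    pderiv j (bind₁ g p) = ∑ i, bind₁ g (pderiv i p) * pderiv j (g i) := by
  induction p using MvPolynomial.induction_on with
  | C a => simp
  | add p q hp hq => simp [hp, hq, Finset.sum_add_distrib, add_mul]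
  | mul_X p i hp =>
      rw [map_mul, bind₁_X_right, pderiv_mul, hp]
      have key : ∀ l : Fin n, bind₁ g (pderiv l (p * X i)) * pderiv j (g l)
          = bind₁ g (pderiv l p) * pderiv j (g l) * g i
            + (if l = i then bind₁ g p * pderiv j (g i) else 0) := by
        intro l
        rw [pderiv_mul, pderiv_X]
        by_cases h : l = i
        · subst h
          simp only [Pi.single_apply, if_pos rfl, map_add, map_mul, bind₁_X_right,
            bind₁_C_right, if_pos rfl]
          ring_nf
          simp [mul_comm, mul_left_comm, mul_assoc]
        · simp only [Pi.single_apply, if_neg (Ne.symm h), if_neg h, mul_zero, map_mul,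
            map_add, map_zero, add_zero, bind₁_X_right]
          ring
      rw [Finset.sum_congr rfl fun l _ => key l, Finset.sum_add_distrib]
      simp [Finset.sum_mul]

lemma jac_one : jac (1 : PolyEnd R n) = 1 := by
  unfold jac
  have : (Matrix.of fun i j => pderiv j ((1 : PolyEnd R n) i))
      = (1 : Matrix (Fin n) (Fin n) (MvPolynomial (Fin n) R)) := by
    ext i j
    simp [Matrix.one_apply, pderiv_X, Pi.single_apply, eq_comm]
  rw [this, Matrix.det_one]

/-- The chain rule for Jacobians. -/
lemma jac_mul (f g : PolyEnd R n) : jac (f * g) = bind₁ g (jac f) * jac g := by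
  unfold jac
  have : (Matrix.of fun i j => pderiv j ((f * g) i))
      = (Matrix.of fun i l => pderiv l (f i)).map (bind₁ g)
        * (Matrix.of fun l j => pderiv j (g l)) := by
    refine Matrix.ext fun i j => ?_
    show pderiv j (bind₁ g (f i)) = ∑ l, bind₁ g (pderiv l (f i)) * pderiv j (g l)
    exact pderiv_bind₁ g (f i) j
  rw [this, Matrix.det_mul]
  congr 1
  exact ((bind₁ g).map_det (Matrix.of fun i l => pderiv l (f i))).symm

end PolyEnd

/-- Automorphisms of affine `n`-space over `R` : endomorphisms admitting a two-sided
compositional inverse. -/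
abbrev PolyAut (R : Type*) [CommRing R] (n : ℕ) := (PolyEnd R n)ˣ

namespace PolyAut

variable {R S : Type*} [CommRing R] [CommRing S] {n : ℕ}

lemma bind₁_val_injective (f : PolyAut R n) :
    Function.Injective (bind₁ (σ := Fin n) (f.val : Fin n → MvPolynomial (Fin n) R)) := by
  intro p q h
  have hinv : ∀ r : MvPolynomial (Fin n) R, bind₁ (f.inv : Fin n → _) (bind₁ (f.val : Fin n → _) r) = r := by
    intro r
    have e : (fun i => bind₁ (f.inv : Fin n → _) ((f.val : Fin n → _) i))
        = (X : Fin n → MvPolynomial (Fin n) R) := f.val_inv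
    refine (bind₁_bind₁ (f.val : Fin n → MvPolynomial (Fin n) R)
      (f.inv : Fin n → MvPolynomial (Fin n) R) r).trans ?_
    calc _ = bind₁ (X : Fin n → MvPolynomial (Fin n) R) r := congrArg (fun g => bind₁ g r) e
      _ = r := by rw [bind₁_X_left, AlgHom.id_apply]
  calc p = bind₁ (f.inv : Fin n → _) (bind₁ (f.val : Fin n → _) p) := (hinv p).symm
    _ = bind₁ (f.inv : Fin n → _) (bind₁ (f.val : Fin n → _) q) := by rw [h]
    _ = q := hinv q

end PolyAut

/-- The subgroup of automorphisms of Jacobian `1`. -/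
noncomputable def SAutGrp (R : Type*) [CommRing R] (n : ℕ) : Subgroup (PolyAut R n) where
  carrier := {f | PolyEnd.jac f.val = 1}
  one_mem' := PolyEnd.jac_one
  mul_mem' := by
    intro f g hf hg
    show PolyEnd.jac (f.val * g.val) = 1
    rw [PolyEnd.jac_mul, hf, hg, map_one, one_mul]
  inv_mem' := by
    intro f hf
    show PolyEnd.jac f.inv = 1
    apply PolyAut.bind₁_val_injective f
    have h1 : PolyEnd.jac (f.inv * f.val) = 1 := by
      rw [f.inv_val]; exact PolyEnd.jac_one
    rw [PolyEnd.jac_mul, hf, mul_one] at h1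
    rw [map_one]
    exact h1

lemma mem_SAutGrp_iff {R : Type*} [CommRing R] {n : ℕ} (f : PolyAut R n) :
    f ∈ SAutGrp R n ↔ PolyEnd.jac f.val = 1 := Iff.rfl

section Translations

variable {R : Type*} [CommRing R] {n : ℕ}

/-- The translation endomorphism `(x_1 + c_1, …, x_n + c_n)`. -/
noncomputable def translEnd (c : Fin n → R) : PolyEnd R n := fun i => X i + C (c i)

lemma translEnd_mul (c d : Fin n → R) :
    translEnd c * translEnd d = translEnd (c + d) := by
  funext i
  show bind₁ (translEnd d) (translEnd c i) = translEnd (c + d) i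
  simp only [translEnd, map_add, bind₁_C_right]
  rw [show bind₁ (translEnd d) (X i) = translEnd d i from bind₁_X_right _ i]
  rw [show bind₁ (translEnd d) (C (c i)) = C (c i) from bind₁_C_right _ _]
  show X i + C (d i) + C (c i) = X i + C (c i + d i)
  rw [map_add]; ring

lemma translEnd_zero : translEnd (0 : Fin n → R) = 1 := by
  funext i
  show X i + C 0 = X i
  simp

/-- The translation automorphism `(x_1 + c_1, …, x_n + c_n)`. -/
noncomputable def transl (c : Fin n → R) : PolyAut R n where
  val := translEnd c
  inv := translEnd (-c)
  val_inv := by rw [translEnd_mul, add_neg_cancel, translEnd_zero]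
  inv_val := by rw [translEnd_mul, neg_add_cancel, translEnd_zero]

@[simp] lemma transl_val (c : Fin n → R) : (transl c).val = translEnd c := rfl

lemma jac_translEnd (c : Fin n → R) : PolyEnd.jac (translEnd c) = 1 := by
  unfold PolyEnd.jac
  have : (Matrix.of fun i j => pderiv j (translEnd c i))
      = (1 : Matrix (Fin n) (Fin n) (MvPolynomial (Fin n) R)) := by
    ext i j
    simp [translEnd, Matrix.one_apply, pderiv_X, Pi.single_apply, eq_comm]
  rw [this, Matrix.det_one]

lemma transl_mem_SAutGrp (c : Fin n → R) : transl c ∈ SAutGrp R n := jac_translEnd c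

/-- The translation as element of `SAut`. -/
noncomputable def translS (c : Fin n → R) : ↥(SAutGrp R n) := ⟨transl c, transl_mem_SAutGrp c⟩

/-- `f` is a translation. -/
def IsTranslation (f : PolyAut R n) : Prop := ∃ c : Fin n → R, f = transl c

end Translations

section Linear

variable {R : Type*} [CommRing R] {n : ℕ}

/-- The linear endomorphism associated with a matrix. -/
noncomputable def linEnd (M : Matrix (Fin n) (Fin n) R) : PolyEnd R n :=
  fun i => ∑ j, C (M i j) * X j

/-- `f` is a linear automorphism (i.e. in the image of `GL_n`). -/
def IsLinear (f : PolyAut R n) : Prop := ∃ M : Matrix (Fin n) (Fin n) R, f.val = linEnd M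

/-- `f` is a linear automorphism given by a matrix of determinant 1
(i.e. in the image of `SL_n`). -/
def MemSL (f : PolyAut R n) : Prop :=
  ∃ M : Matrix (Fin n) (Fin n) R, M.det = 1 ∧ f.val = linEnd M

/-- `f` is a triangular automorphism. -/
def IsTriangular (f : PolyAut R n) : Prop :=
  ∃ (a : Fin n → Rˣ) (b : Fin n → MvPolynomial (Fin n) R),
    (∀ i : Fin n, b i ∈ MvPolynomial.supported R {j : Fin n | (j : ℕ) < (i : ℕ)}) ∧
    ∀ i : Fin n, f.val i = C ((a i : R)) * X i + b i

/-- The tame subgroup, generated by linear and triangular automorphisms. -/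
noncomputable def TameGrp (R : Type*) [CommRing R] (n : ℕ) : Subgroup (PolyAut R n) :=
  Subgroup.closure {f | IsLinear f ∨ IsTriangular f}

end Linear

section Map

variable {R S : Type*} [CommRing R] [CommRing S] {n : ℕ}

/-- Applying a ring homomorphism to all coefficients, as a monoid homomorphism of
endomorphisms of affine `n`-space. -/
noncomputable def endMapHom (φ : R →+* S) : PolyEnd R n →* PolyEnd S n where
  toFun f := fun i => MvPolynomial.map φ (f i)
  map_one' := funext fun i => by
    show MvPolynomial.map φ (X i) = X i
    simp
  map_mul' f g := funext fun i => by
    show MvPolynomial.map φ (bind₁ g (f i)) = bind₁ (fun j => MvPolynomial.map φ (g j)) (MvPolynomial.map φ (f i))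
    apply map_bind₁

/-- Applying a ring homomorphism to all coefficients, on automorphisms. -/
noncomputable def autMap (φ : R →+* S) : PolyAut R n →* PolyAut S n :=
  Units.map (endMapHom φ)

lemma jac_endMapHom (φ : R →+* S) (f : PolyEnd R n) :
    PolyEnd.jac (endMapHom φ f) = MvPolynomial.map φ (PolyEnd.jac f) := by
  unfold PolyEnd.jac
  have : (Matrix.of fun i j => pderiv j ((endMapHom φ f) i))
      = (Matrix.of fun i j => pderiv j (f i)).map (MvPolynomial.map φ) :=
    Matrix.ext fun i j => by
      simp only [Matrix.of_apply, Matrix.map_apply]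
      exact pderiv_map
  rw [this, RingHom.map_det]
  rfl

/-- Specialisation of an automorphism over `R[t]` at a value `t₀ ∈ R`. -/
noncomputable def specAut (t0 : R) : PolyAut (Polynomial R) n →* PolyAut R n :=
  autMap (Polynomial.evalRingHom t0)

lemma specAut_mem_SAutGrp (h : PolyAut (Polynomial R) n)
    (hh : h ∈ SAutGrp (Polynomial R) n) (t0 : R) :
    specAut t0 h ∈ SAutGrp R n := by
  show PolyEnd.jac ((specAut t0 h).val) = 1
  have : (specAut t0 h).val = endMapHom (Polynomial.evalRingHom t0) h.val := rfl
  rw [this, jac_endMapHom, hh, map_one]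

/-- Specialisation, from `SAut` over `R[t]` to `SAut` over `R`. -/
noncomputable def specSAut (t0 : R) (h : PolyAut (Polynomial R) n)
    (hh : h ∈ SAutGrp (Polynomial R) n) : ↥(SAutGrp R n) :=
  ⟨specAut t0 h, specAut_mem_SAutGrp h hh t0⟩

/-- A subgroup `N` of `SAut_k(𝔸ⁿ)` is closed under specialisation if for every
automorphism `h` over `k[t]` of Jacobian `1` all of whose specialisations at
`t₀ ≠ 0` lie in `N`, the specialisation at `0` also lies in `N`. Every subgroup
that is closed in the ind-topology has this property. -/
def ClosedUnderSpec {R : Type*} [CommRing R] {n : ℕ} (N : Subgroup ↥(SAutGrp R n)) : Prop :=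
  ∀ (h : PolyAut (Polynomial R) n) (hh : h ∈ SAutGrp (Polynomial R) n),
    (∀ t0 : R, t0 ≠ 0 → specSAut t0 h hh ∈ N) → specSAut 0 h hh ∈ N

/-- A subgroup `N` of `Aut_k(𝔸ⁿ)` is closed under specialisation if for every
automorphism `h` over `k[t]` all of whose specialisations at `t₀ ≠ 0` lie in `N`,
the specialisation at `0` also lies in `N`. -/
def ClosedUnderSpecAut {R : Type*} [CommRing R] {n : ℕ} (N : Subgroup (PolyAut R n)) : Prop :=
  ∀ h : PolyAut (Polynomial R) n,
    (∀ t0 : R, t0 ≠ 0 → specAut t0 h ∈ N) → specAut 0 h ∈ N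

end Map

lemma bind₁_X_right' {R : Type*} [CommRing R] {n : ℕ} (f : PolyEnd R n) (i : Fin n) :
    bind₁ f (X i) = f i := bind₁_X_right f i

lemma bind₁_C_right' {R : Type*} [CommRing R] {n : ℕ} (f : PolyEnd R n) (r : R) :
    bind₁ f (C r) = C r := bind₁_C_right f r

lemma bind₁_monomial' {R : Type*} [CommRing R] {n : ℕ} (f : PolyEnd R n) (d : Fin n →₀ ℕ)
    (r : R) : bind₁ f (monomial d r) = C r * ∏ i ∈ d.support, f i ^ d i :=
  bind₁_monomial f d r



section Aux

open MvPolynomial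

variable {R : Type*} [CommRing R] {n : ℕ}

lemma exp_zero_of_mem_supported {s : Set (Fin n)} {p : MvPolynomial (Fin n) R}
    (hp : p ∈ MvPolynomial.supported R s) {i : Fin n} (hi : i ∉ s) :
    ∀ m ∈ p.support, m i = 0 := by
  intro m hm
  by_contra h
  exact hi (MvPolynomial.mem_supported.1 hp
    ((MvPolynomial.mem_vars i).2 ⟨m, hm, Finsupp.mem_support_iff.2 h⟩))

lemma pderiv_eq_zero_of_supported {s : Set (Fin n)} {p : MvPolynomial (Fin n) R}
    (hp : p ∈ MvPolynomial.supported R s) {i : Fin n} (hi : i ∉ s) :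
    pderiv i p = 0 :=
  pderiv_eq_zero_of_notMem_vars (fun hv => hi (MvPolynomial.mem_supported.1 hp hv))

lemma pderiv_eq_zero_of_exp_zero {p : MvPolynomial (Fin n) R} {i : Fin n}
    (hp : ∀ m ∈ p.support, m i = 0) : pderiv i p = 0 := by
  apply pderiv_eq_zero_of_notMem_vars
  intro hv
  obtain ⟨m, hm, him⟩ := (MvPolynomial.mem_vars i).1 hv
  exact Finsupp.mem_support_iff.1 him (hp m hm)

/-- Substituting `g` into `p` does nothing if `g` agrees with `X` on all variables
occurring in `p` (here: all variables except `i`). -/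
lemma bind₁_eq_self_of (g : Fin n → MvPolynomial (Fin n) R) (p : MvPolynomial (Fin n) R)
    {i : Fin n} (hp : ∀ m ∈ p.support, m i = 0) (hg : ∀ l, l ≠ i → g l = X l) :
    bind₁ g p = p := by
  conv_lhs => rw [p.as_sum]
  rw [map_sum]
  conv_rhs => rw [p.as_sum]
  refine Finset.sum_congr rfl fun m hm => ?_
  rw [bind₁_monomial, monomial_eq]
  congr 1
  rw [Finsupp.prod]
  refine Finset.prod_congr rfl fun l hl => ?_
  have hli : l ≠ i := by
    rintro rfl
    exact Finsupp.mem_support_iff.1 hl (hp m hm)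
  rw [hg l hli]

/-- The elementary endomorphism `x_i ↦ x_i + p`. -/
noncomputable def elemEnd (i : Fin n) (p : MvPolynomial (Fin n) R) : PolyEnd R n :=
  fun l => X l + if l = i then p else 0

lemma elemEnd_apply_ne (i : Fin n) (p : MvPolynomial (Fin n) R) {l : Fin n} (h : l ≠ i) :
    elemEnd i p l = X l := by simp [elemEnd, h]

lemma elemEnd_apply_self (i : Fin n) (p : MvPolynomial (Fin n) R) :
    elemEnd i p i = X i + p := by simp [elemEnd]

lemma elemEnd_zero (i : Fin n) : elemEnd i (0 : MvPolynomial (Fin n) R) = 1 := by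
  funext l
  simp [elemEnd]

lemma elemEnd_mul (i : Fin n) (p q : MvPolynomial (Fin n) R)
    (hp : ∀ m ∈ p.support, m i = 0) :
    elemEnd i p * elemEnd i q = elemEnd i (p + q) := by
  funext l
  show bind₁ (elemEnd i q) (X l + if l = i then p else 0) = X l + if l = i then p + q else 0
  rw [map_add, bind₁_X_right']
  by_cases h : l = i
  · rw [if_pos h, if_pos h, h, elemEnd_apply_self,
      bind₁_eq_self_of _ p hp (fun l' hl' => elemEnd_apply_ne i q hl')]
    ring
  · rw [if_neg h, if_neg h, map_zero, elemEnd_apply_ne i q h]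

/-- The elementary automorphism `x_i ↦ x_i + p`, where `p` does not involve `x_i`. -/
noncomputable def elemAut (i : Fin n) (p : MvPolynomial (Fin n) R)
    (hp : ∀ m ∈ p.support, m i = 0) : PolyAut R n where
  val := elemEnd i p
  inv := elemEnd i (-p)
  val_inv := by rw [elemEnd_mul i p (-p) hp, add_neg_cancel, elemEnd_zero]
  inv_val := by
    rw [elemEnd_mul i (-p) p (by simpa using hp), neg_add_cancel, elemEnd_zero]

/-- The diagonal (scaling) endomorphism. -/
noncomputable def scaleEnd (d : Fin n → R) : PolyEnd R n := fun l => C (d l) * X l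

lemma scaleEnd_mul (d d' : Fin n → R) :
    scaleEnd d * scaleEnd d' = scaleEnd (d * d') := by
  funext l
  show bind₁ (scaleEnd d') (C (d l) * X l) = C (d l * d' l) * X l
  rw [map_mul, algHom_C, bind₁_X_right']
  show C (d l) * (C (d' l) * X l) = _
  rw [map_mul, mul_assoc]

lemma scaleEnd_one : scaleEnd (1 : Fin n → R) = 1 := by
  funext l
  show C 1 * X l = X l
  simp

/-- The diagonal (scaling) automorphism. -/
noncomputable def scaleAut (u : Fin n → Rˣ) : PolyAut R n where
  val := scaleEnd (fun l => (u l : R))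
  inv := scaleEnd (fun l => ((u l)⁻¹ : Rˣ))
  val_inv := by
    rw [scaleEnd_mul]
    convert scaleEnd_one using 2
    funext l
    simp
  inv_val := by
    rw [scaleEnd_mul]
    convert scaleEnd_one using 2
    funext l
    simp

lemma linEnd_mul (A B : Matrix (Fin n) (Fin n) R) :
    linEnd A * linEnd B = linEnd (A * B) := by
  funext i
  show bind₁ (linEnd B) (∑ j, C (A i j) * X j) = ∑ l, C ((A * B) i l) * X l
  rw [map_sum]
  have h1 : ∀ j : Fin n, bind₁ (linEnd B) (C (A i j) * X j)
      = ∑ l, C (A i j * B j l) * X l := by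
    intro j
    rw [map_mul, algHom_C, bind₁_X_right', MvPolynomial.algebraMap_eq]
    show C (A i j) * (∑ l, C (B j l) * X l) = _
    rw [Finset.mul_sum]
    refine Finset.sum_congr rfl fun l _ => ?_
    rw [map_mul, mul_assoc]
  rw [Finset.sum_congr rfl fun j _ => h1 j, Finset.sum_comm]
  refine Finset.sum_congr rfl fun l _ => ?_
  rw [Matrix.mul_apply, map_sum, Finset.sum_mul]

lemma scaleEnd_eq_linEnd (d : Fin n → R) :
    scaleEnd d = linEnd (Matrix.diagonal d) := by
  funext i
  show C (d i) * X i = ∑ j, C (Matrix.diagonal d i j) * X j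
  rw [Finset.sum_eq_single i]
  · simp
  · intro j _ hj
    simp [Matrix.diagonal_apply_ne' d hj]
  · simp

lemma jac_linEnd (M : Matrix (Fin n) (Fin n) R) :
    PolyEnd.jac (linEnd M) = C (M.det) := by
  unfold PolyEnd.jac
  have h : (Matrix.of fun i j => pderiv j (linEnd M i))
      = M.map (C : R →+* MvPolynomial (Fin n) R) := by
    refine Matrix.ext fun i j => ?_
    show pderiv j (∑ l, C (M i l) * X l) = C (M i j)
    rw [map_sum]
    rw [Finset.sum_eq_single j]
    · simp [pderiv_C_mul, pderiv_X]
    · intro l _ hl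
      simp [pderiv_C_mul, pderiv_X, Pi.single_apply, hl]
    · simp
  rw [h, ← RingHom.mapMatrix_apply, ← RingHom.map_det]

lemma jac_scaleEnd (d : Fin n → R) :
    PolyEnd.jac (scaleEnd d) = C (∏ l, d l) := by
  rw [scaleEnd_eq_linEnd, jac_linEnd, Matrix.det_diagonal]

lemma jac_elemEnd (i : Fin n) (p : MvPolynomial (Fin n) R)
    (hp : ∀ m ∈ p.support, m i = 0) :
    PolyEnd.jac (elemEnd i p) = 1 := by
  unfold PolyEnd.jac
  have h : (Matrix.of fun l j => pderiv j (elemEnd i p l))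
      = 1 + Matrix.replicateCol Unit (Pi.single i (1 : MvPolynomial (Fin n) R))
          * Matrix.replicateRow Unit (fun j => pderiv j p) := by
    refine Matrix.ext fun l j => ?_
    show pderiv j (X l + if l = i then p else 0)
      = (1 : Matrix (Fin n) (Fin n) _) l j
        + (Matrix.replicateCol Unit (Pi.single i (1 : MvPolynomial (Fin n) R))
          * Matrix.replicateRow Unit (fun j => pderiv j p)) l j
    have hcr : (Matrix.replicateCol Unit (Pi.single i (1 : MvPolynomial (Fin n) R))
        * Matrix.replicateRow Unit (fun j => pderiv j p)) l j
        = (Pi.single i (1 : MvPolynomial (Fin n) R) : Fin n → MvPolynomial (Fin n) R) l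
          * pderiv j p := by
      simp [Matrix.mul_apply]
    rw [hcr, map_add, pderiv_X]
    by_cases h : l = i
    · subst h
      simp [Matrix.one_apply, Pi.single_apply, eq_comm]
    · simp [Matrix.one_apply, Pi.single_apply, h, eq_comm]
  rw [h, Matrix.det_one_add_replicateCol_mul_replicateRow]
  have : dotProduct (fun j => pderiv j p) (Pi.single i (1 : MvPolynomial (Fin n) R))
      = pderiv i p := by
    rw [dotProduct]
    rw [Finset.sum_eq_single i]
    · simp
    · intro l _ hl
      simp [Pi.single_apply, hl]
    · simp
  rw [this, pderiv_eq_zero_of_exp_zero hp, add_zero]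

/-- Jacobian of a triangular endomorphism. -/
lemma jac_triangularEnd (a : Fin n → R) (b : Fin n → MvPolynomial (Fin n) R)
    (hb : ∀ i : Fin n, b i ∈ MvPolynomial.supported R {j : Fin n | (j : ℕ) < (i : ℕ)}) :
    PolyEnd.jac (fun i => C (a i) * X i + b i : PolyEnd R n) = C (∏ i, a i) := by
  unfold PolyEnd.jac
  set J := Matrix.of fun i j =>
    pderiv j ((fun i => C (a i) * X i + b i : PolyEnd R n) i) with hJ
  have hentry : ∀ i j : Fin n, J i j
      = C (a i) * (if i = j then 1 else 0) + pderiv j (b i) := by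
    intro i j
    show pderiv j (C (a i) * X i + b i) = _
    rw [map_add, pderiv_C_mul, pderiv_X]
    congr 2
    simp [Pi.single_apply]
  have htri : J.BlockTriangular OrderDual.toDual := by
    intro i j hij
    have hij' : i < j := hij
    rw [hentry, if_neg (ne_of_lt hij'), mul_zero, zero_add]
    exact pderiv_eq_zero_of_supported (hb i) (by simpa using not_lt.2 (le_of_lt hij'))
  rw [Matrix.det_of_lowerTriangular J htri]
  rw [map_prod]
  refine Finset.prod_congr rfl fun i _ => ?_
  rw [hentry, if_pos rfl, mul_one,
    pderiv_eq_zero_of_supported (hb i) (by simp), add_zero]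

end Aux


section Aux2

open MvPolynomial

variable {R : Type*} [CommRing R] {n : ℕ}

lemma scaleAut_mul (u v : Fin n → Rˣ) : scaleAut u * scaleAut v = scaleAut (u * v) := by
  ext1
  show (scaleAut u).val * (scaleAut v).val = (scaleAut (u * v)).val
  show scaleEnd _ * scaleEnd _ = scaleEnd _
  rw [scaleEnd_mul]
  rfl

lemma scaleAut_inv (u : Fin n → Rˣ) : (scaleAut u)⁻¹ = scaleAut u⁻¹ := by
  ext1
  show (scaleAut u).inv = (scaleAut u⁻¹).val
  show scaleEnd _ = scaleEnd _
  congr 1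

lemma bind₁_scaleEnd_monomial (u : Fin n → R) (m : Fin n →₀ ℕ) (c : R) :
    bind₁ (scaleEnd u) (monomial m c)
      = monomial m (c * ∏ l ∈ m.support, u l ^ m l) := by
  rw [bind₁_monomial', monomial_eq, Finsupp.prod]
  show C c * ∏ l ∈ m.support, (C (u l) * X l) ^ m l = _
  simp only [mul_pow, Finset.prod_mul_distrib, map_mul, map_prod, map_pow]
  ring

/-- Conjugating an elementary map by a scaling. -/
lemma scale_mul_elem_mul_scale (d : Fin n → Rˣ) (i : Fin n) (p : MvPolynomial (Fin n) R) :
    scaleEnd (fun l => (d l : R)) * elemEnd i p * scaleEnd (fun l => (((d l)⁻¹ : Rˣ) : R))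
      = elemEnd i (C (d i : R) * bind₁ (scaleEnd (fun l => (((d l)⁻¹ : Rˣ) : R))) p) := by
  funext l
  set dinv : Fin n → R := fun l => (((d l)⁻¹ : Rˣ) : R) with hdinv
  show bind₁ (scaleEnd dinv) (bind₁ (elemEnd i p) (C (d l : R) * X l)) = _
  rw [map_mul, algHom_C, bind₁_X_right', map_mul, AlgHom.commutes]
  show (algebraMap R _) (d l : R) * bind₁ (scaleEnd dinv) (X l + if l = i then p else 0)
      = X l + if l = i then C (d i : R) * bind₁ (scaleEnd dinv) p else 0
  rw [MvPolynomial.algebraMap_eq, map_add, bind₁_X_right']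
  show C (d l : R) * (C (dinv l) * X l + bind₁ (scaleEnd dinv) (if l = i then p else 0)) = _
  rw [mul_add, ← mul_assoc, ← map_mul]
  have hdl : (d l : R) * dinv l = 1 := by
    simp [hdinv]
  rw [hdl, map_one, one_mul]
  by_cases h : l = i
  · subst h
    rw [if_pos rfl, if_pos rfl]
  · rw [if_neg h, if_neg h, map_zero, mul_zero]

lemma bind₁_scaleEnd_mem_supported (u : Fin n → R) {s : Set (Fin n)}
    {p : MvPolynomial (Fin n) R} (hp : p ∈ MvPolynomial.supported R s) :
    bind₁ (scaleEnd u) p ∈ MvPolynomial.supported R s := by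
  refine Algebra.adjoin_induction ?_ ?_ ?_ ?_ hp
  · rintro x ⟨j, hj, rfl⟩
    rw [bind₁_X_right']
    exact Subalgebra.mul_mem _ (Subalgebra.algebraMap_mem _ (u j))
      (Algebra.subset_adjoin ⟨j, hj, rfl⟩)
  · intro r
    rw [AlgHom.commutes]
    exact Subalgebra.algebraMap_mem _ r
  · intro x y _ _ hx hy
    rw [map_add]; exact Subalgebra.add_mem _ hx hy
  · intro x y _ _ hx hy
    rw [map_mul]; exact Subalgebra.mul_mem _ hx hy

end Aux2


section Aux3

open MvPolynomial

variable {k : Type*} [Field k] [Infinite k] {n : ℕ}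

lemma mem_map_of_mem' {N : Subgroup ↥(SAutGrp k n)} {x : PolyAut k n} (hx : x ∈ SAutGrp k n)
    (h : (⟨x, hx⟩ : ↥(SAutGrp k n)) ∈ N) : x ∈ N.map (SAutGrp k n).subtype :=
  ⟨⟨x, hx⟩, h, rfl⟩

lemma mem_of_mem_map {N : Subgroup ↥(SAutGrp k n)} {x : ↥(SAutGrp k n)}
    (h : (x : PolyAut k n) ∈ N.map (SAutGrp k n).subtype) : x ∈ N := by
  obtain ⟨y, hy, hxy⟩ := h
  have : y = x := Subtype.ext hxy
  rwa [this] at hy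

lemma conj_mem_map {N : Subgroup ↥(SAutGrp k n)} (hnorm : N.Normal)
    {x g : PolyAut k n} (hg : g ∈ SAutGrp k n) (hx : x ∈ N.map (SAutGrp k n).subtype) :
    g * x * g⁻¹ ∈ N.map (SAutGrp k n).subtype := by
  obtain ⟨y, hy, hyx⟩ := hx
  have hmem : (⟨g, hg⟩ : ↥(SAutGrp k n)) * y * (⟨g, hg⟩ : ↥(SAutGrp k n))⁻¹ ∈ N :=
    hnorm.conj_mem y hy ⟨g, hg⟩
  have h2 := Subgroup.mem_map_of_mem (SAutGrp k n).subtype hmem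
  have heq : (SAutGrp k n).subtype ((⟨g, hg⟩ : ↥(SAutGrp k n)) * y * (⟨g, hg⟩ : ↥(SAutGrp k n))⁻¹)
      = g * x * g⁻¹ := by
    rw [map_mul, map_mul, map_inv, ← hyx]
    rfl
  rwa [heq] at h2

lemma exp_zero_monomial {m : Fin n →₀ ℕ} {c : k} {i : Fin n} (hm : m i = 0) :
    ∀ m' ∈ (monomial m c).support, m' i = 0 := by
  intro m' hm'
  rw [mem_support_iff, coeff_monomial] at hm'
  by_cases h : m = m'
  · rw [← h]; exact hm
  · simp [h] at hm'

lemma elem_monomial_mem (hn : 2 ≤ n) (N : Subgroup ↥(SAutGrp k n)) (hnorm : N.Normal)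
    (hSL : ∀ f : ↥(SAutGrp k n), MemSL (f : PolyAut k n) → f ∈ N)
    (i : Fin n) (m : Fin n →₀ ℕ) (c : k) (hm : m i = 0) :
    elemAut i (monomial m c) (exp_zero_monomial hm) ∈ N.map (SAutGrp k n).subtype := by
  classical
  have hn1 : 1 < n := by omega
  have hn0 : 0 < n := by omega
  obtain ⟨j, hji⟩ : ∃ j : Fin n, j ≠ i := by
    by_cases h0 : (i : ℕ) = 0
    · refine ⟨⟨1, hn1⟩, fun h => ?_⟩
      have := congrArg Fin.val h
      simp at this
      omega
    · refine ⟨⟨0, hn0⟩, fun h => ?_⟩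
      have := congrArg Fin.val h
      simp at this
      omega
  set dexp : ℕ := m j + 1 with hd
  have hPne : (Polynomial.X ^ dexp - Polynomial.C 1 : Polynomial k) ≠ 0 :=
    Polynomial.X_pow_sub_C_ne_zero (by omega) 1
  have hfin : ({x : k | (Polynomial.X ^ dexp - Polynomial.C 1 : Polynomial k).IsRoot x}
      ∪ {0}).Finite :=
    (Polynomial.finite_setOf_isRoot hPne).union (Set.finite_singleton 0)
  obtain ⟨a, ha⟩ := hfin.infinite_compl.nonempty
  rw [Set.mem_compl_iff, Set.mem_union] at ha
  push_neg at ha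
  obtain ⟨hroot, ha0⟩ := ha
  have ha0' : a ≠ 0 := by simpa using ha0
  have hapow : a ^ dexp ≠ 1 := by
    intro h
    exact hroot (by simp [Polynomial.IsRoot, h])
  set au : kˣ := Units.mk0 a ha0' with hau
  have hden : a ^ dexp - 1 ≠ 0 := sub_ne_zero.mpr hapow
  set c' : k := c / (a ^ dexp - 1) with hc'
  set dvec : Fin n → kˣ := fun l => if l = i then au else if l = j then au⁻¹ else 1 with hdvec
  have hprod : (∏ l, ((dvec l : kˣ) : k)) = 1 := by
    rw [← Finset.prod_erase_mul Finset.univ _ (Finset.mem_univ i)]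
    have hji' : j ∈ Finset.univ.erase i := Finset.mem_erase.2 ⟨hji, Finset.mem_univ j⟩
    rw [← Finset.prod_erase_mul _ _ hji']
    have h1 : ∀ l ∈ (Finset.univ.erase i).erase j, ((dvec l : kˣ) : k) = 1 := by
      intro l hl
      rcases Finset.mem_erase.1 hl with ⟨hlj, hl2⟩
      rcases Finset.mem_erase.1 hl2 with ⟨hli, -⟩
      simp [hdvec, hli, hlj]
    rw [Finset.prod_eq_one h1, one_mul]
    have h2 : dvec j = au⁻¹ := by simp [hdvec, hji]
    have h3 : dvec i = au := by simp [hdvec]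
    rw [h2, h3, ← Units.val_mul, inv_mul_cancel, Units.val_one]
  have hsS : scaleAut dvec ∈ SAutGrp k n := by
    show PolyEnd.jac (scaleEnd fun l => ((dvec l : kˣ) : k)) = 1
    rw [jac_scaleEnd, hprod, map_one]
  have hsN : scaleAut dvec ∈ N.map (SAutGrp k n).subtype := by
    refine mem_map_of_mem' hsS (hSL _ ?_)
    exact ⟨Matrix.diagonal (fun l => ((dvec l : kˣ) : k)),
      by rw [Matrix.det_diagonal]; exact hprod, scaleEnd_eq_linEnd _⟩
  have hmc' : ∀ m' ∈ (monomial m c').support, m' i = 0 := exp_zero_monomial hm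
  set g : PolyAut k n := elemAut i (monomial m c') hmc' with hg
  have hgS : g ∈ SAutGrp k n := by
    show PolyEnd.jac (elemEnd i (monomial m c')) = 1
    exact jac_elemEnd i _ hmc'
  have h1 : (scaleAut dvec).val * g.val * ((scaleAut dvec)⁻¹).val
      = elemEnd i (C ((dvec i : kˣ) : k)
          * bind₁ (scaleEnd (fun l => ((((dvec l)⁻¹ : kˣ)) : k))) (monomial m c')) :=
    scale_mul_elem_mul_scale dvec i (monomial m c')
  have hdveci : ((dvec i : kˣ) : k) = a := by simp [hdvec, hau]
  have hprod2 : (∏ l ∈ m.support, ((((dvec l)⁻¹ : kˣ)) : k) ^ m l) = a ^ (m j) := by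
    by_cases hjmem : j ∈ m.support
    · rw [Finset.prod_eq_single_of_mem j hjmem]
      · simp [hdvec, hji, hau]
      · intro l hl hlj
        have hli : l ≠ i := by
          intro h; rw [h] at hl; exact (Finsupp.mem_support_iff.1 hl) hm
        simp [hdvec, hli, hlj]
    · have hmj : m j = 0 := Finsupp.notMem_support_iff.1 hjmem
      rw [hmj, pow_zero]
      refine Finset.prod_eq_one fun l hl => ?_
      have hli : l ≠ i := by
        intro h; rw [h] at hl; exact (Finsupp.mem_support_iff.1 hl) hm
      have hlj : l ≠ j := by
        intro h; rw [h] at hl; exact hjmem hl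
      simp [hdvec, hli, hlj]
  have h2 : C ((dvec i : kˣ) : k)
        * bind₁ (scaleEnd (fun l => ((((dvec l)⁻¹ : kˣ)) : k))) (monomial m c')
      = monomial m (c' * a ^ dexp) := by
    rw [bind₁_scaleEnd_monomial, C_mul_monomial, hdveci, hprod2, hd]
    congr 1
    ring
  have hkey : scaleAut dvec * (g * (scaleAut dvec)⁻¹ * g⁻¹)
      = elemAut i (monomial m c) (exp_zero_monomial hm) := by
    have hassoc : scaleAut dvec * (g * (scaleAut dvec)⁻¹ * g⁻¹)
        = (scaleAut dvec * g * (scaleAut dvec)⁻¹) * g⁻¹ := by group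
    rw [hassoc]
    ext1
    rw [Units.val_mul, Units.val_mul, Units.val_mul, h1, h2]
    show elemEnd i (monomial m (c' * a ^ dexp)) * elemEnd i (-(monomial m c'))
        = elemEnd i (monomial m c)
    rw [elemEnd_mul i _ _ (exp_zero_monomial hm)]
    have hsc : c' * (a ^ dexp - 1) = c := by
      rw [hc']
      field_simp
    have hmon : (monomial m) (c' * a ^ dexp) + -((monomial m) c') = (monomial m) c := by
      rw [← map_neg (monomial m), ← map_add (monomial m)]
      congr 1
      linear_combination hsc
    rw [hmon]
  rw [← hkey]
  exact mul_mem hsN (conj_mem_map hnorm hgS (inv_mem hsN))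

lemma elem_mem (hn : 2 ≤ n) (N : Subgroup ↥(SAutGrp k n)) (hnorm : N.Normal)
    (hSL : ∀ f : ↥(SAutGrp k n), MemSL (f : PolyAut k n) → f ∈ N)
    (i : Fin n) (p : MvPolynomial (Fin n) k)
    (hp : ∀ m ∈ p.support, m i = 0) :
    elemAut i p hp ∈ N.map (SAutGrp k n).subtype := by
  classical
  have main : ∀ (s : Finset (Fin n →₀ ℕ)) (p : MvPolynomial (Fin n) k)
      (hp : ∀ m ∈ p.support, m i = 0), p.support ⊆ s →
      elemAut i p hp ∈ N.map (SAutGrp k n).subtype := by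
    intro s
    induction s using Finset.induction_on with
    | empty =>
      intro p hp hsub
      have hp0 : p = 0 := support_eq_empty.1 (Finset.subset_empty.1 hsub)
      subst hp0
      have h1 : elemAut i (0 : MvPolynomial (Fin n) k) hp = 1 := by
        ext1
        exact elemEnd_zero i
      rw [h1]
      exact one_mem _
    | @insert m s hms ih =>
      intro p hp hsub
      by_cases hc : coeff m p = 0
      · refine ih p hp fun m' hm' => ?_
        rcases Finset.mem_insert.1 (hsub hm') with h | h
        · exact absurd (MvPolynomial.mem_support_iff.1 hm') (by rw [h]; simpa using hc)
        · exact h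
      · set q := p - monomial m (coeff m p) with hqdef
        have hcoeffq : ∀ m', coeff m' q = if m = m' then 0 else coeff m' p := by
          intro m'
          rw [hqdef, coeff_sub, coeff_monomial]
          by_cases h : m = m' <;> simp [h]
        have hq_i : ∀ m' ∈ q.support, m' i = 0 := by
          intro m' hm'
          have h1 := MvPolynomial.mem_support_iff.1 hm'
          rw [hcoeffq] at h1
          by_cases h : m = m'
          · simp [h] at h1
          · rw [if_neg h] at h1
            exact hp m' (MvPolynomial.mem_support_iff.2 h1)
        have hqsub : q.support ⊆ s := by
          intro m' hm'
          have h1 := MvPolynomial.mem_support_iff.1 hm'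
          rw [hcoeffq] at h1
          by_cases h : m = m'
          · simp [h] at h1
          · rw [if_neg h] at h1
            rcases Finset.mem_insert.1 (hsub (MvPolynomial.mem_support_iff.2 h1)) with h2 | h2
            · exact absurd h2.symm h
            · exact h2
        have hmi : m i = 0 := hp m (MvPolynomial.mem_support_iff.2 hc)
        have hsplit : elemAut i (monomial m (coeff m p)) (exp_zero_monomial hmi)
            * elemAut i q hq_i = elemAut i p hp := by
          ext1
          show elemEnd i (monomial m (coeff m p)) * elemEnd i q = elemEnd i p
          have harg : monomial m (coeff m p) + q = p := by rw [hqdef]; ring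
          rw [elemEnd_mul i _ _ (exp_zero_monomial hmi), harg]
        rw [← hsplit]
        exact mul_mem (elem_monomial_mem hn N hnorm hSL i m (coeff m p) hmi) (ih q hq_i hqsub)
  exact main p.support p hp subset_rfl

lemma unitri_mem (hn : 2 ≤ n) (N : Subgroup ↥(SAutGrp k n)) (hnorm : N.Normal)
    (hSL : ∀ f : ↥(SAutGrp k n), MemSL (f : PolyAut k n) → f ∈ N) :
    ∀ (m : ℕ) (u : PolyAut k n) (b : Fin n → MvPolynomial (Fin n) k),
      (∀ l : Fin n, b l ∈ MvPolynomial.supported k {j : Fin n | (j : ℕ) < (l : ℕ)}) →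
      (u.val = fun l => X l + b l) →
      (∀ l : Fin n, m ≤ (l : ℕ) → b l = 0) →
      u ∈ N.map (SAutGrp k n).subtype := by
  intro m
  induction m with
  | zero =>
    intro u b hb hval hvan
    have h1 : u = 1 := by
      ext1
      rw [hval]
      funext l
      rw [hvan l (Nat.zero_le _), add_zero]
      rfl
    rw [h1]
    exact one_mem _
  | succ m ih =>
    intro u b hb hval hvan
    by_cases hmn : m < n
    · set i : Fin n := ⟨m, hmn⟩ with hi
      have hbi : ∀ m' ∈ (b i).support, m' i = 0 :=
        exp_zero_of_mem_supported (hb i) (by simp)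
      set e := elemAut i (b i) hbi with he
      have heN : e ∈ N.map (SAutGrp k n).subtype := elem_mem hn N hnorm hSL i (b i) hbi
      set w := u * e⁻¹ with hw
      have hwval : w.val = fun l => X l + Function.update b i 0 l := by
        funext l
        have h0 : w.val l = bind₁ (elemEnd i (-(b i))) (X l + b l) := by
          show bind₁ (elemEnd i (-(b i))) (u.val l) = _
          rw [hval]
        rw [h0, map_add, bind₁_X_right']
        by_cases hl : l = i
        · subst hl
          rw [elemEnd_apply_self,
            bind₁_eq_self_of _ _ hbi (fun l' hl' => elemEnd_apply_ne _ _ hl'),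
            Function.update_self]
          ring
        · rw [elemEnd_apply_ne _ _ hl, Function.update_of_ne hl]
          congr 1
          by_cases hlm : m + 1 ≤ (l : ℕ)
          · rw [hvan l hlm, map_zero]
          · refine bind₁_eq_self_of _ _
              (exp_zero_of_mem_supported (hb l) ?_)
              (fun l' hl' => elemEnd_apply_ne _ _ hl')
            have hlv : (l : ℕ) ≠ m := fun hc => hl (Fin.ext (by rw [hc, hi]))
            simp only [Set.mem_setOf_eq, hi]
            omega
      have hupd_supp : ∀ l : Fin n,
          Function.update b i 0 l ∈ MvPolynomial.supported k {j : Fin n | (j : ℕ) < (l : ℕ)} := by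
        intro l
        by_cases hl : l = i
        · subst hl; rw [Function.update_self]; exact Subalgebra.zero_mem _
        · rw [Function.update_of_ne hl]; exact hb l
      have hvan' : ∀ l : Fin n, m ≤ (l : ℕ) → Function.update b i 0 l = 0 := by
        intro l hl
        by_cases hli : l = i
        · subst hli; rw [Function.update_self]
        · rw [Function.update_of_ne hli]
          refine hvan l ?_
          have : (l : ℕ) ≠ m := fun hc => hli (Fin.ext (by rw [hc, hi]))
          omega
      have hwN := ih w (Function.update b i 0) hupd_supp hwval hvan'
      have hue : u = w * e := by rw [hw, inv_mul_cancel_right]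
      rw [hue]
      exact mul_mem hwN heN
    · refine ih u b hb hval fun l hl => hvan l (by omega)

lemma triangular_mem (hn : 2 ≤ n) (N : Subgroup ↥(SAutGrp k n)) (hnorm : N.Normal)
    (hSL : ∀ f : ↥(SAutGrp k n), MemSL (f : PolyAut k n) → f ∈ N)
    (h : PolyAut k n) (ht : IsTriangular h) (hjac : PolyEnd.jac h.val = 1) :
    h ∈ N.map (SAutGrp k n).subtype := by
  obtain ⟨a, b, hb, hval⟩ := ht
  have hval' : h.val = fun i => C ((a i : k)) * X i + b i := funext hval
  have hjac' : PolyEnd.jac h.val = C (∏ l, (a l : k)) := by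
    rw [hval']; exact jac_triangularEnd _ _ hb
  have hprod : (∏ l, (a l : k)) = 1 := by
    have h1 : (C (∏ l, (a l : k)) : MvPolynomial (Fin n) k) = C 1 := by
      rw [map_one, ← hjac', hjac]
    exact C_injective _ _ h1
  have hsS : scaleAut a ∈ SAutGrp k n := by
    show PolyEnd.jac (scaleEnd fun l => (a l : k)) = 1
    rw [jac_scaleEnd, hprod, map_one]
  have hsN : scaleAut a ∈ N.map (SAutGrp k n).subtype := by
    refine mem_map_of_mem' hsS (hSL _ ?_)
    exact ⟨Matrix.diagonal (fun l => (a l : k)),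
      by rw [Matrix.det_diagonal]; exact hprod, scaleEnd_eq_linEnd _⟩
  set u := (scaleAut a)⁻¹ * h with hu
  have huval : u.val = fun l => X l + C (((a l)⁻¹ : kˣ) : k) * b l := by
    funext l
    show bind₁ h.val (C (((a l)⁻¹ : kˣ) : k) * X l) = _
    rw [map_mul, bind₁_C_right', bind₁_X_right', hval']
    show C (((a l)⁻¹ : kˣ) : k) * (C ((a l : k)) * X l + b l) = _
    rw [mul_add, ← mul_assoc, ← map_mul, Units.inv_mul, map_one, one_mul]
  have hb' : ∀ l : Fin n,
      C (((a l)⁻¹ : kˣ) : k) * b l ∈ MvPolynomial.supported k {j : Fin n | (j : ℕ) < (l : ℕ)} := by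
    intro l
    refine Subalgebra.mul_mem _ ?_ (hb l)
    rw [← MvPolynomial.algebraMap_eq]
    exact Subalgebra.algebraMap_mem _ _
  have huN : u ∈ N.map (SAutGrp k n).subtype :=
    unitri_mem hn N hnorm hSL n u _ hb' huval (fun l hl => absurd l.isLt (by omega))
  have hhu : h = scaleAut a * u := by rw [hu, mul_inv_cancel_left]
  rw [hhu]
  exact mul_mem hsN huN

end Aux3


section Aux4

open MvPolynomial

variable {k : Type*} [Field k] {n : ℕ}

/-- Generating set: special linear or triangular automorphisms of Jacobian one. -/
def GenSet (k : Type*) [Field k] (n : ℕ) : Set (PolyAut k n) :=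
  {h | PolyEnd.jac h.val = 1 ∧ (MemSL h ∨ IsTriangular h)}

/-- The subgroup generated by `GenSet`. -/
noncomputable def Mgrp (k : Type*) [Field k] (n : ℕ) : Subgroup (PolyAut k n) :=
  Subgroup.closure (GenSet k n)

/-- Diagonal unit vector `(c, 1, …, 1)`. -/
noncomputable def Dvec (hn : 0 < n) (c : kˣ) : Fin n → kˣ :=
  fun l => if l = ⟨0, hn⟩ then c else 1

/-- The diagonal automorphism `diag(c,1,…,1)`. -/
noncomputable def Dunit (hn : 0 < n) (c : kˣ) : PolyAut k n := scaleAut (Dvec hn c)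

lemma Dvec_mul (hn : 0 < n) (c e : kˣ) : Dvec (k := k) hn c * Dvec hn e = Dvec hn (c * e) := by
  funext l
  show (if l = ⟨0, hn⟩ then c else 1) * (if l = ⟨0, hn⟩ then e else 1) = _
  by_cases h : l = ⟨0, hn⟩ <;> simp [Dvec, h]

lemma Dunit_mul (hn : 0 < n) (c e : kˣ) :
    Dunit (k := k) hn c * Dunit hn e = Dunit hn (c * e) := by
  rw [Dunit, Dunit, Dunit, scaleAut_mul, Dvec_mul]

lemma Dunit_one (hn : 0 < n) : Dunit (k := k) hn 1 = 1 := by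
  ext1
  show scaleEnd (fun l => ((Dvec hn 1 l : kˣ) : k)) = (1 : PolyEnd k n)
  have h1 : (fun l => ((Dvec (k := k) hn 1 l : kˣ) : k)) = (1 : Fin n → k) := by
    funext l
    by_cases h : l = ⟨0, hn⟩ <;> simp [Dvec, h]
  rw [h1, scaleEnd_one]

lemma Dunit_inv (hn : 0 < n) (c : kˣ) : (Dunit (k := k) hn c)⁻¹ = Dunit hn c⁻¹ := by
  have h1 : Dunit (k := k) hn c * Dunit hn c⁻¹ = 1 := by
    rw [Dunit_mul, mul_inv_cancel, Dunit_one]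
  exact inv_eq_of_mul_eq_one_right h1

lemma Dvec_prod (hn : 0 < n) (c : kˣ) : (∏ l, ((Dvec (k := k) hn c l : kˣ) : k)) = (c : k) := by
  have h1 : ∀ l : Fin n, ((Dvec (k := k) hn c l : kˣ) : k)
      = if l = ⟨0, hn⟩ then (c : k) else 1 := by
    intro l
    by_cases h : l = ⟨0, hn⟩ <;> simp [Dvec, h]
  rw [Finset.prod_congr rfl fun l _ => h1 l, Finset.prod_ite_eq' Finset.univ]
  simp

lemma jac_Dunit (hn : 0 < n) (c : kˣ) :
    PolyEnd.jac (Dunit (k := k) hn c).val = C (c : k) := by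
  show PolyEnd.jac (scaleEnd fun l => ((Dvec hn c l : kˣ) : k)) = _
  rw [jac_scaleEnd, Dvec_prod]

lemma jac_mul_const {f g : PolyAut k n} {c e : k}
    (hf : PolyEnd.jac f.val = C c) (hg : PolyEnd.jac g.val = C e) :
    PolyEnd.jac ((f * g).val) = C (c * e) := by
  show PolyEnd.jac (f.val * g.val) = _
  rw [PolyEnd.jac_mul, hf, hg, bind₁_C_right', ← map_mul]

lemma jac_inv_eq {f : PolyAut k n} {c : kˣ} (hc : PolyEnd.jac f.val = C (c : k)) :
    PolyEnd.jac ((f⁻¹).val) = C ((c⁻¹ : kˣ) : k) := by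
  have h1 : (1 : MvPolynomial (Fin n) k) = C (c : k) * PolyEnd.jac ((f⁻¹).val) := by
    have h2 := PolyEnd.jac_mul f.val ((f⁻¹).val)
    rw [show f.val * (f⁻¹).val = 1 from f.val_inv, PolyEnd.jac_one, hc, bind₁_C_right'] at h2
    exact h2
  calc PolyEnd.jac ((f⁻¹).val)
      = C ((c⁻¹ : kˣ) : k) * (C (c : k) * PolyEnd.jac ((f⁻¹).val)) := by
        rw [← mul_assoc, ← map_mul, Units.inv_mul, map_one, one_mul]
    _ = C ((c⁻¹ : kˣ) : k) * 1 := by rw [← h1]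
    _ = C ((c⁻¹ : kˣ) : k) := mul_one _

lemma genset_conj (hn : 0 < n) (c : kˣ) {h : PolyAut k n} (hh : h ∈ GenSet k n) :
    Dunit hn c * h * (Dunit hn c)⁻¹ ∈ GenSet k n := by
  obtain ⟨hjac, hcase⟩ := hh
  have hjac' : PolyEnd.jac h.val = C (1 : k) := by rw [map_one]; exact hjac
  have hjacnew : PolyEnd.jac ((Dunit hn c * h * (Dunit hn c)⁻¹).val) = 1 := by
    have h1 := jac_mul_const (jac_mul_const (jac_Dunit hn c) hjac') (jac_inv_eq (jac_Dunit hn c))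
    rw [h1, mul_one]
    rw [show ((c : k) * ((c⁻¹ : kˣ) : k)) = 1 by rw [← Units.val_mul, mul_inv_cancel, Units.val_one]]
    exact map_one C
  refine ⟨hjacnew, ?_⟩
  rcases hcase with hsl | htri
  · left
    obtain ⟨M0, hdet, hval⟩ := hsl
    refine ⟨Matrix.diagonal (fun l => ((Dvec hn c l : kˣ) : k)) * M0
        * Matrix.diagonal (fun l => (((Dvec hn c l)⁻¹ : kˣ) : k)), ?_, ?_⟩
    · rw [Matrix.det_mul, Matrix.det_mul, Matrix.det_diagonal, Matrix.det_diagonal, hdet,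
        Dvec_prod, mul_one]
      have : (∏ l : Fin n, (((Dvec (k := k) hn c l)⁻¹ : kˣ) : k)) = ((c⁻¹ : kˣ) : k) := by
        rw [show (fun l => (((Dvec (k := k) hn c l)⁻¹ : kˣ) : k))
            = fun l => ((Dvec (k := k) hn c⁻¹ l : kˣ) : k) from ?_]
        · exact Dvec_prod hn c⁻¹
        · funext l
          by_cases hl : l = ⟨0, hn⟩ <;> simp [Dvec, hl]
      rw [this, ← Units.val_mul, mul_inv_cancel, Units.val_one]
    · show (Dunit hn c).val * h.val * ((Dunit hn c)⁻¹).val = _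
      have hv1 : (Dunit (k := k) hn c).val = linEnd (Matrix.diagonal (fun l => ((Dvec hn c l : kˣ) : k))) := by
        show scaleEnd _ = _
        rw [scaleEnd_eq_linEnd]
      have hv2 : ((Dunit (k := k) hn c)⁻¹).val
          = linEnd (Matrix.diagonal (fun l => (((Dvec hn c l)⁻¹ : kˣ) : k))) := by
        show scaleEnd _ = _
        rw [scaleEnd_eq_linEnd]
      rw [hv1, hv2, hval, linEnd_mul, linEnd_mul]
  · right
    obtain ⟨a, b, hb, hval⟩ := htri
    refine ⟨a, fun l => C ((Dvec hn c l : kˣ) : k)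
        * bind₁ (scaleEnd (fun l' => (((Dvec hn c l')⁻¹ : kˣ) : k))) (b l), ?_, ?_⟩
    · intro l
      refine Subalgebra.mul_mem _ ?_ (bind₁_scaleEnd_mem_supported _ (hb l))
      rw [← MvPolynomial.algebraMap_eq]
      exact Subalgebra.algebraMap_mem _ _
    · intro i
      show bind₁ ((Dunit hn c)⁻¹).val (bind₁ h.val ((Dunit hn c).val i)) = _
      show bind₁ ((Dunit hn c)⁻¹).val (bind₁ h.val (C ((Dvec hn c i : kˣ) : k) * X i)) = _
      rw [map_mul, bind₁_C_right', bind₁_X_right', hval i, map_mul, bind₁_C_right']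
      show C ((Dvec hn c i : kˣ) : k) * bind₁ (scaleEnd (fun l' => (((Dvec hn c l')⁻¹ : kˣ) : k)))
          (C ((a i : k)) * X i + b i) = _
      rw [map_add, map_mul, bind₁_C_right', bind₁_X_right']
      show C ((Dvec hn c i : kˣ) : k) * (C ((a i : k)) * (C (((Dvec hn c i)⁻¹ : kˣ) : k) * X i)
          + bind₁ (scaleEnd (fun l' => (((Dvec hn c l')⁻¹ : kˣ) : k))) (b i)) = _
      rw [mul_add]
      congr 1
      rw [← mul_assoc, ← mul_assoc, ← map_mul, ← map_mul]
      congr 2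
      rw [mul_comm ((Dvec hn c i : kˣ) : k), mul_assoc, ← Units.val_mul, mul_inv_cancel,
        Units.val_one, mul_one]

lemma Mgrp_conj (hn : 0 < n) (c : kˣ) {x : PolyAut k n} (hx : x ∈ Mgrp k n) :
    Dunit hn c * x * (Dunit hn c)⁻¹ ∈ Mgrp k n := by
  induction hx using Subgroup.closure_induction with
  | mem y hy => exact Subgroup.subset_closure (genset_conj hn c hy)
  | one =>
    have h1 : Dunit (k := k) hn c * 1 * (Dunit hn c)⁻¹ = 1 := by group
    rw [h1]; exact one_mem _
  | mul y z hy hz ihy ihz =>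
    have h1 : Dunit (k := k) hn c * (y * z) * (Dunit hn c)⁻¹
        = (Dunit hn c * y * (Dunit hn c)⁻¹) * (Dunit hn c * z * (Dunit hn c)⁻¹) := by group
    rw [h1]; exact mul_mem ihy ihz
  | inv y hy ihy =>
    have h1 : Dunit (k := k) hn c * y⁻¹ * (Dunit hn c)⁻¹
        = (Dunit hn c * y * (Dunit hn c)⁻¹)⁻¹ := by group
    rw [h1]; exact inv_mem ihy

/-- The subgroup of automorphisms which, after dividing by the obvious diagonal
automorphism compensating the (constant) Jacobian, lie in `Mgrp`. -/
noncomputable def Hgrp (hn : 0 < n) : Subgroup (PolyAut k n) where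
  carrier := {f | ∃ c : kˣ, PolyEnd.jac f.val = C (c : k) ∧ (Dunit hn c)⁻¹ * f ∈ Mgrp k n}
  one_mem' := by
    refine ⟨1, ?_, ?_⟩
    · show PolyEnd.jac (1 : PolyEnd k n) = _
      rw [PolyEnd.jac_one, Units.val_one, map_one]
    · rw [Dunit_one, inv_one, mul_one]
      exact one_mem _
  mul_mem' := by
    rintro f g ⟨c, hc1, hc2⟩ ⟨e, he1, he2⟩
    refine ⟨c * e, ?_, ?_⟩
    · rw [Units.val_mul]
      exact jac_mul_const hc1 he1
    · have key : (Dunit hn (c * e))⁻¹ * (f * g)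
          = ((Dunit hn e)⁻¹ * ((Dunit hn c)⁻¹ * f) * (Dunit hn e)) * ((Dunit hn e)⁻¹ * g) := by
        rw [← Dunit_mul]
        group
      rw [key]
      refine mul_mem ?_ he2
      have h1 : Dunit (k := k) hn e⁻¹ * ((Dunit hn c)⁻¹ * f) * (Dunit hn e⁻¹)⁻¹
          = (Dunit hn e)⁻¹ * ((Dunit hn c)⁻¹ * f) * (Dunit hn e) := by
        rw [Dunit_inv hn e, Dunit_inv hn e⁻¹, inv_inv]
      rw [← h1]
      exact Mgrp_conj hn e⁻¹ hc2
  inv_mem' := by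
    rintro f ⟨c, h1, h2⟩
    refine ⟨c⁻¹, jac_inv_eq h1, ?_⟩
    have key : (Dunit (k := k) hn c⁻¹)⁻¹ * f⁻¹
        = Dunit hn c * ((Dunit hn c)⁻¹ * f)⁻¹ * (Dunit hn c)⁻¹ := by
      rw [Dunit_inv, inv_inv]
      group
    rw [key]
    exact Mgrp_conj hn c (inv_mem h2)

lemma tame_gen_mem_H (hn : 0 < n) {f : PolyAut k n} (hf : IsLinear f ∨ IsTriangular f) :
    f ∈ Hgrp (k := k) hn := by
  rcases hf with hlin | htri
  · obtain ⟨M0, hval⟩ := hlin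
    have hjac : PolyEnd.jac f.val = C M0.det := by rw [hval]; exact jac_linEnd M0
    have hdet : M0.det ≠ 0 := by
      intro h0
      have h2 := PolyEnd.jac_mul f.val ((f⁻¹).val)
      rw [show f.val * (f⁻¹).val = 1 from f.val_inv, PolyEnd.jac_one, hjac, bind₁_C_right',
        h0, map_zero, zero_mul] at h2
      exact one_ne_zero h2
    refine ⟨Units.mk0 M0.det hdet, hjac, Subgroup.subset_closure ⟨?_, Or.inl ?_⟩⟩
    · have h1 := jac_mul_const
        (jac_inv_eq (c := Units.mk0 M0.det hdet) (jac_Dunit hn (Units.mk0 M0.det hdet))) hjac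
      rw [h1]
      have h2 : (((Units.mk0 M0.det hdet)⁻¹ : kˣ) : k) * M0.det = 1 := by
        rw [Units.val_inv_eq_inv_val, Units.val_mk0, inv_mul_cancel₀ hdet]
      rw [h2, map_one]
    · refine ⟨Matrix.diagonal (fun l => (((Dvec hn (Units.mk0 M0.det hdet) l)⁻¹ : kˣ) : k)) * M0,
        ?_, ?_⟩
      · rw [Matrix.det_mul, Matrix.det_diagonal]
        have h3 : (fun l => (((Dvec (k := k) hn (Units.mk0 M0.det hdet) l)⁻¹ : kˣ) : k))
            = fun l => ((Dvec (k := k) hn (Units.mk0 M0.det hdet)⁻¹ l : kˣ) : k) := by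
          funext l
          by_cases hl : l = ⟨0, hn⟩ <;> simp [Dvec, hl]
        rw [h3, Dvec_prod, Units.val_inv_eq_inv_val, Units.val_mk0]
        exact inv_mul_cancel₀ hdet
      · show ((Dunit hn (Units.mk0 M0.det hdet))⁻¹).val * f.val = _
        have hv2 : ((Dunit (k := k) hn (Units.mk0 M0.det hdet))⁻¹).val
            = linEnd (Matrix.diagonal
                (fun l => (((Dvec hn (Units.mk0 M0.det hdet) l)⁻¹ : kˣ) : k))) := by
          show scaleEnd _ = _
          rw [scaleEnd_eq_linEnd]
        rw [hv2, hval, linEnd_mul]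
  · obtain ⟨a, b, hb, hval⟩ := htri
    have hcoe : ((∏ l, a l : kˣ) : k) = ∏ l, ((a l : k)) := map_prod (Units.coeHom k) _ _
    have hjac : PolyEnd.jac f.val = C ((∏ l, a l : kˣ) : k) := by
      rw [funext hval, hcoe]
      exact jac_triangularEnd _ _ hb
    refine ⟨∏ l, a l, hjac, Subgroup.subset_closure ⟨?_, Or.inr ?_⟩⟩
    · have h1 := jac_mul_const (jac_inv_eq (jac_Dunit hn (∏ l, a l))) hjac
      rw [h1, ← Units.val_mul, inv_mul_cancel, Units.val_one, map_one]
    · set cu : kˣ := ∏ l, a l with hcu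
      refine ⟨fun l => (Dvec hn cu l)⁻¹ * a l,
        fun l => C (((Dvec hn cu l)⁻¹ : kˣ) : k) * b l, ?_, ?_⟩
      · intro l
        refine Subalgebra.mul_mem _ ?_ (hb l)
        rw [← MvPolynomial.algebraMap_eq]
        exact Subalgebra.algebraMap_mem _ _
      · intro i
        show bind₁ f.val (((Dunit hn cu)⁻¹).val i) = _
        show bind₁ f.val (C (((Dvec hn cu i)⁻¹ : kˣ) : k) * X i) = _
        rw [map_mul, bind₁_C_right', bind₁_X_right', hval i]
        rw [mul_add, ← mul_assoc, ← map_mul, Units.val_mul]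
  
end Aux4


lemma Mgrp_le_map {k : Type*} [Field k] [Infinite k] {n : ℕ} (hn : 2 ≤ n)
    (N : Subgroup ↥(SAutGrp k n)) (hnorm : N.Normal)
    (hSL : ∀ f : ↥(SAutGrp k n), MemSL (f : PolyAut k n) → f ∈ N) :
    Mgrp k n ≤ N.map (SAutGrp k n).subtype := by
  refine (Subgroup.closure_le _).2 ?_
  rintro h ⟨hjac, hcase⟩
  rcases hcase with hsl | htri
  · exact mem_map_of_mem' ((mem_SAutGrp_iff h).2 hjac) (hSL ⟨h, (mem_SAutGrp_iff h).2 hjac⟩ hsl)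
  · exact triangular_mem hn N hnorm hSL h htri hjac


/-- **Proposition (Lewis).**  Let `k` be an infinite field, `n ≥ 2`.  Every normal subgroup of
`SAut_k(𝔸ⁿ)` containing `SL_n(k)` contains every tame automorphism of Jacobian 1. -/
theorem sautgrp_normal_SL_contains_tame {k : Type*} [Field k] [Infinite k] {n : ℕ}
    (hn : 2 ≤ n) (N : Subgroup ↥(SAutGrp k n)) (hnorm : N.Normal)
    (hSL : ∀ f : ↥(SAutGrp k n), MemSL (f : PolyAut k n) → f ∈ N) :
    ∀ f : ↥(SAutGrp k n), (f : PolyAut k n) ∈ TameGrp k n → f ∈ N := by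
  intro f hf
  have hn0 : 0 < n := by omega
  have hle : TameGrp k n ≤ Hgrp (k := k) hn0 := by
    refine (Subgroup.closure_le _).2 ?_
    intro g hg
    exact tame_gen_mem_H hn0 hg
  obtain ⟨c, hc1, hc2⟩ := hle hf
  have hfjac : PolyEnd.jac ((f : PolyAut k n)).val = 1 := f.2
  have hcval : (C ((c : k)) : MvPolynomial (Fin n) k) = C (1 : k) := by
    rw [map_one, ← hc1, hfjac]
  have hcu : c = 1 := by
    refine Units.ext ?_
    rw [Units.val_one]
    exact C_injective _ _ hcval
  rw [hcu, Dunit_one, inv_one, one_mul] at hc2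
  exact mem_of_mem_map (Mgrp_le_map hn N hnorm hSL hc2)
end

section
/- Let k be an infinite field and let V ⊆ k[x] be the k-linear subspace spanned by the set {s(x) − a·s(ax+b) : s ∈ k[x], a ∈ k^*, b ∈ k}. Then V = k[x]. -/
open Polynomial in
/-- The `k`-linear subspace of `k[x]` spanned by the polynomials `s(x) - a·s(ax+b)`
for `s ∈ k[x]`, `a ∈ k^*`, `b ∈ k`. -/
noncomputable def Vspan (k : Type*) [Field k] : Submodule k (Polynomial k) :=
  Submodule.span k {p : Polynomial k | ∃ (s : Polynomial k) (a b : k), a ≠ 0 ∧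
    p = s - C a * s.comp (C a * X + C b)}

open Polynomial in
/-- **Lemma.**  If `k` is an infinite field, then the span `V` of the polynomials
`s(x) - a·s(ax+b)` is all of `k[x]`. -/
theorem Vspan_eq_top_of_infinite {k : Type*} [Field k] [Infinite k] :
    Vspan k = ⊤ := by
  rw [eq_top_iff]
  intro p _
  induction p using Polynomial.induction_on' with
  | add p q hp hq => exact Submodule.add_mem _ (hp trivial) (hq trivial)
  | monomial n c =>
    suffices h : (X : Polynomial k)^n ∈ Vspan k by
      rw [← C_mul_X_pow_eq_monomial, ← smul_eq_C_mul]
      exact Submodule.smul_mem _ c h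
    have hf : (X^(n+2) - X : Polynomial k) ≠ 0 := by
      intro h
      have := congrArg (fun p => coeff p (n+2)) h
      simp [coeff_X, coeff_X_pow] at this
    have hfin : {x : k | (X^(n+2) - X : Polynomial k).IsRoot x}.Finite :=
      Polynomial.finite_setOf_isRoot hf
    obtain ⟨a, ha⟩ := hfin.infinite_compl.nonempty
    have ha' : a ^ (n+2) ≠ a := by
      intro h
      apply ha
      simp [Polynomial.IsRoot, h]
    have ha0 : a ≠ 0 := by rintro rfl; simp at ha'
    have ha1 : 1 - a ^ (n+1) ≠ 0 := by
      intro h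
      apply ha'
      have : a ^ (n+1) = 1 := by linear_combination -h
      calc a ^ (n+2) = a ^ (n+1) * a := by ring
        _ = a := by rw [this]; ring
    have hmem : (X : Polynomial k)^n - C a * ((X : Polynomial k)^n).comp (C a * X + C 0)
        ∈ Vspan k :=
      Submodule.subset_span ⟨X^n, a, 0, ha0, rfl⟩
    have heq : (X : Polynomial k)^n - C a * ((X : Polynomial k)^n).comp (C a * X + C 0)
        = C (1 - a ^ (n+1)) * X^n := by
      rw [pow_comp, X_comp]
      simp only [map_zero, add_zero, mul_pow, ← C_pow, ← C_mul, ← C_sub, pow_succ]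
      rw [map_sub, map_mul, map_one]
      ring
    rw [heq, ← smul_eq_C_mul] at hmem
    have := Submodule.smul_mem (Vspan k) (1 - a ^ (n+1))⁻¹ hmem
    rwa [smul_smul, inv_mul_cancel₀ ha1, one_smul] at this
end

section
/- Let k be a finite field with q elements and let V ⊆ k[x] be the k-linear subspace spanned by the set {s(x) − a·s(ax+b) : s ∈ k[x], a ∈ k^*, b ∈ k}. Then the images in the quotient k-vector space k[x]/V of the polynomials x^{q−1}·(x^q − x)^{m(q−1)−1}, for m = 1, 2, 3, …, are linearly independent over k. In particular, k[x]/V is infinite-dimensional as a k-vector space. -/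
open Polynomial

section Aux
variable {k : Type*} [Field k] [Fintype k]

local notation "q" => Fintype.card k

lemma gpoly_monic : (X ^ q - X : k[X]).Monic := by
  apply Polynomial.monic_X_pow_sub
  rw [degree_X]
  exact_mod_cast Fintype.one_lt_card

lemma gpoly_natDegree : (X ^ q - X : k[X]).natDegree = q := by
  have h : (X : k[X]).degree < (X ^ q : k[X]).degree := by
    rw [degree_X, degree_X_pow]
    exact_mod_cast Fintype.one_lt_card
  have := degree_sub_eq_left_of_degree_lt h
  rw [degree_X_pow] at this
  exact natDegree_eq_of_degree_eq_some this

lemma gpoly_comp (a b : k) :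
    (X ^ q - X : k[X]).comp (C a * X + C b) = C a * (X ^ q - X) := by
  obtain ⟨p, hc⟩ := CharP.exists k
  haveI : CharP k p := hc
  obtain ⟨n, hp, hcard⟩ := FiniteField.card k p
  haveI : Fact p.Prime := ⟨hp⟩
  haveI : CharP k[X] p := charP_of_injective_algebraMap (algebraMap k k[X]).injective p
  have hq : (C a * X + C b : k[X]) ^ q = C a * X ^ q + C b := by
    rw [hcard, add_pow_char_pow, mul_pow, ← C_pow, ← C_pow, ← hcard,
      FiniteField.pow_card, FiniteField.pow_card]
  rw [sub_comp, X_comp, pow_comp, X_comp, hq]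
  ring

/-- The linear functional `p ↦ coefficient of X^(q·M-1) in p %ₘ (X^q - X)^M`,
where `M = (m+1)(q-1)`. -/
noncomputable def ell (m : ℕ) : k[X] →ₗ[k] k :=
  (lcoeff k (q * ((m + 1) * (q - 1)) - 1)).comp
    (modByMonicHom ((X ^ q - X : k[X]) ^ ((m + 1) * (q - 1))))

lemma ell_apply (m : ℕ) (p : k[X]) :
    ell m p = (p %ₘ (X ^ q - X : k[X]) ^ ((m + 1) * (q - 1))).coeff
      (q * ((m + 1) * (q - 1)) - 1) := rfl

lemma ell_gen (m : ℕ) (s : k[X]) (a b : k) (ha : a ≠ 0) :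
    ell m (s - C a * s.comp (C a * X + C b)) = 0 := by
  classical
  set M : ℕ := (m + 1) * (q - 1) with hM
  set G : k[X] := (X ^ q - X : k[X]) ^ M with hG
  set N : ℕ := q * M - 1 with hN
  set r : k[X] := C a * X + C b with hr
  have hq1 : 1 < q := Fintype.one_lt_card
  have hGmonic : G.Monic := gpoly_monic.pow M
  have hGdeg : G.natDegree = q * M := by
    rw [hG, gpoly_monic.natDegree_pow, gpoly_natDegree, Nat.mul_comm]
  have hMpos : 0 < M := by apply Nat.mul_pos <;> omega
  have hqM : 0 < q * M := Nat.mul_pos (by omega) hMpos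
  have haM : a ^ M = 1 := by
    rw [hM, mul_comm, pow_mul, FiniteField.pow_card_sub_one_eq_one a ha, one_pow]
  -- write s = G * t + u
  set u : k[X] := s %ₘ G with hu
  set t : k[X] := s /ₘ G with ht
  have hsd : s = G * t + u := by rw [hu, ht, add_comm]; exact (modByMonic_add_div s G).symm
  have hudeg : u.degree < G.degree := degree_modByMonic_lt s hGmonic
  have hudeg' : u.natDegree ≤ N := by
    rcases eq_or_ne u 0 with h0 | h0
    · simp [h0]
    · have := natDegree_lt_natDegree h0 hudeg
      rw [hGdeg] at this; omega
  -- G ∘ r = G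
  have hGcomp : G.comp r = G := by
    rw [hG, pow_comp, gpoly_comp, mul_pow, ← C_pow, haM, map_one, one_mul]
  have hrdeg : r.natDegree = 1 := natDegree_linear ha
  have hrlead : r.leadingCoeff = a := leadingCoeff_linear ha
  -- mod of the transformed polynomial
  have hcomp : C a * s.comp r = G * (C a * t.comp r) + C a * u.comp r := by
    rw [hsd, add_comp, mul_comp, hGcomp]; ring
  have hmodmul : (G * (C a * t.comp r)) %ₘ G = 0 :=
    (modByMonic_eq_zero_iff_dvd hGmonic).mpr ⟨_, rfl⟩
  have hucompdeg : (u.comp r).natDegree = u.natDegree := by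
    rw [natDegree_comp, hrdeg, mul_one]
  have hmodu : (C a * u.comp r) %ₘ G = C a * u.comp r := by
    rw [modByMonic_eq_self_iff hGmonic, degree_C_mul ha]
    rcases eq_or_ne u 0 with h0 | h0
    · rw [h0, zero_comp, degree_zero, degree_eq_natDegree hGmonic.ne_zero]
      exact WithBot.bot_lt_coe _
    · have hlc : (u.comp r).leadingCoeff ≠ 0 := by
        rw [leadingCoeff_comp (by rw [hrdeg]; norm_num), hrlead]
        exact mul_ne_zero (leadingCoeff_ne_zero.mpr h0) (pow_ne_zero _ ha)
      have hcne : u.comp r ≠ 0 := fun hcz => by simp [hcz] at hlc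
      calc (u.comp r).degree = ((u.comp r).natDegree : WithBot ℕ) := degree_eq_natDegree hcne
        _ = (u.natDegree : WithBot ℕ) := by rw [hucompdeg]
        _ = u.degree := (degree_eq_natDegree h0).symm
        _ < G.degree := hudeg
  have hmod : (C a * s.comp r) %ₘ G = C a * u.comp r := by
    rw [hcomp, add_modByMonic, hmodmul, zero_add, hmodu]
  have hsmod : s %ₘ G = u := by
    rw [hsd, add_modByMonic, (modByMonic_eq_zero_iff_dvd hGmonic).mpr ⟨t, rfl⟩, zero_add,
      (modByMonic_eq_self_iff hGmonic).mpr hudeg]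
  -- now compute both coefficients
  have key : (C a * u.comp r).coeff N = u.coeff N := by
    rcases lt_or_eq_of_le hudeg' with hlt | heq
    · rw [coeff_C_mul, coeff_eq_zero_of_natDegree_lt (by rw [hucompdeg]; exact hlt),
        coeff_eq_zero_of_natDegree_lt hlt, mul_zero]
    · rcases eq_or_ne u 0 with h0 | h0
      · simp [h0]
      · have h1 : (u.comp r).natDegree = N := by rw [hucompdeg, heq]
        have hcN : (u.comp r).coeff N = u.leadingCoeff * a ^ N := by
          rw [← h1, coeff_natDegree, leadingCoeff_comp (by rw [hrdeg]; norm_num), hrlead, heq, h1]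
        have hNq : a ^ (N + 1) = 1 := by
          have hNM : N + 1 = q * M := by omega
          rw [hNM, mul_comm, pow_mul, haM, one_pow]
        have hring : a * (u.leadingCoeff * a ^ N) = a ^ (N + 1) * u.leadingCoeff := by ring
        rw [coeff_C_mul, hcN, hring, hNq, one_mul, ← heq, coeff_natDegree]
  rw [map_sub, ell_apply, ell_apply, ← hM, ← hG, ← hN, hmod, hsmod, key, sub_self]

lemma ell_basis (m j : ℕ) :
    ell m ((X : k[X]) ^ (q - 1) * (X ^ q - X) ^ ((j + 1) * (q - 1) - 1))
      = if j = m then 1 else 0 := by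
  classical
  set M : ℕ := (m + 1) * (q - 1) with hM
  set G : k[X] := (X ^ q - X : k[X]) ^ M with hG
  set N : ℕ := q * M - 1 with hN
  have hq1 : 1 < q := Fintype.one_lt_card
  have hGmonic : G.Monic := gpoly_monic.pow M
  have hGdeg : G.natDegree = q * M := by
    rw [hG, gpoly_monic.natDegree_pow, gpoly_natDegree, Nat.mul_comm]
  have hMpos : 0 < M := by apply Nat.mul_pos <;> omega
  set D : ℕ := (j + 1) * (q - 1) - 1 with hD
  set v : k[X] := (X : k[X]) ^ (q - 1) * (X ^ q - X) ^ D with hv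
  have hvmonic : v.Monic := (monic_X_pow _).mul (gpoly_monic.pow D)
  have hvdeg : v.natDegree = (q - 1) + q * D := by
    rw [hv, (monic_X_pow _).natDegree_mul (gpoly_monic.pow D), natDegree_X_pow,
      gpoly_monic.natDegree_pow, gpoly_natDegree, Nat.mul_comm]
  have h3 : q * (M - 1) + q = q * M := by
    have hM1 : M - 1 + 1 = M := by omega
    calc q * (M - 1) + q = q * ((M - 1) + 1) := by ring
      _ = q * M := by rw [hM1]
  rw [ell_apply, ← hM, ← hG, ← hN]
  have hqM : 0 < q * M := Nat.mul_pos (by omega) hMpos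
  rcases lt_trichotomy j m with hjm | hjm | hjm
  · -- j < m : degree of v is smaller than N
    rw [if_neg (by omega)]
    have hmul : (j + 1) * (q - 1) + (q - 1) ≤ (m + 1) * (q - 1) := by
      calc (j + 1) * (q - 1) + (q - 1) = (j + 2) * (q - 1) := by ring
        _ ≤ (m + 1) * (q - 1) := Nat.mul_le_mul_right _ (by omega)
    have hD1 : D + 1 = (j + 1) * (q - 1) := by
      rw [hD]
      exact Nat.succ_pred_eq_of_pos (Nat.mul_pos (Nat.succ_pos j) (by omega))
    have h4 : D + 1 + (q - 1) ≤ M := by rw [hD1, hM]; exact hmul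
    have hDM2 : D + 1 ≤ M - 1 := by omega
    have h1 : q * (D + 1) ≤ q * (M - 1) := Nat.mul_le_mul_left q hDM2
    have h2 : q * (D + 1) = q * D + q := by ring
    have hdeg : v.natDegree < N := by rw [hvdeg, hN]; omega
    have hvmod : v %ₘ G = v := by
      rw [modByMonic_eq_self_iff hGmonic, degree_eq_natDegree hvmonic.ne_zero,
        degree_eq_natDegree hGmonic.ne_zero, hGdeg]
      exact_mod_cast by omega
    rw [hvmod, coeff_eq_zero_of_natDegree_lt hdeg]
  · -- j = m : v is monic of degree exactly N
    rw [if_pos hjm]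
    have hDM : D = M - 1 := by
      have hD' : D = (m + 1) * (q - 1) - 1 := by rw [hD, hjm]
      rw [hD', hM]
    have hdeg : v.natDegree = N := by rw [hvdeg, hN, hDM]; omega
    have hvmod : v %ₘ G = v := by
      rw [modByMonic_eq_self_iff hGmonic, degree_eq_natDegree hvmonic.ne_zero,
        degree_eq_natDegree hGmonic.ne_zero, hGdeg, hdeg, hN]
      exact_mod_cast by omega
    rw [hvmod, ← hdeg, coeff_natDegree, hvmonic.leadingCoeff]
  · -- j > m : G divides v
    rw [if_neg (by omega)]
    have hmul : (m + 1) * (q - 1) + (q - 1) ≤ (j + 1) * (q - 1) := by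
      calc (m + 1) * (q - 1) + (q - 1) = (m + 2) * (q - 1) := by ring
        _ ≤ (j + 1) * (q - 1) := Nat.mul_le_mul_right _ (by omega)
    have hD1 : D + 1 = (j + 1) * (q - 1) := by
      rw [hD]
      exact Nat.succ_pred_eq_of_pos (Nat.mul_pos (Nat.succ_pos j) (by omega))
    have h4 : M + (q - 1) ≤ D + 1 := by rw [hD1, hM]; exact hmul
    have hDM : M ≤ D := by omega
    have hdvd : G ∣ v := by
      refine ⟨(X : k[X]) ^ (q - 1) * (X ^ q - X) ^ (D - M), ?_⟩
      have hsplit : D = M + (D - M) := by omega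
      rw [hv, hG]
      calc (X : k[X]) ^ (q - 1) * (X ^ q - X) ^ D
          = (X : k[X]) ^ (q - 1) * ((X ^ q - X) ^ M * (X ^ q - X) ^ (D - M)) := by
            rw [← pow_add, ← hsplit]
        _ = (X ^ q - X) ^ M * ((X : k[X]) ^ (q - 1) * (X ^ q - X) ^ (D - M)) := by ring
    rw [(modByMonic_eq_zero_iff_dvd hGmonic).mpr hdvd, coeff_zero]

end Aux

open Polynomial in
/-- **Lemma.**  If `k` is a finite field with `q` elements, then the classes of the polynomials
`x^{q-1}·(x^q-x)^{m(q-1)-1}`, `m ≥ 1`, in `k[x]/V` are linearly independent; in particular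
`k[x]/V` is infinite-dimensional over `k`. -/
theorem Vspan_quotient_linearIndependent {k : Type*} [Field k] [Fintype k] :
    LinearIndependent k (fun m : ℕ =>
      Submodule.Quotient.mk (p := Vspan k)
        (X ^ (Fintype.card k - 1) *
          (X ^ Fintype.card k - X) ^ ((m + 1) * (Fintype.card k - 1) - 1))) ∧
    ¬ Module.Finite k (Polynomial k ⧸ Vspan k) := by
  classical
  set v : ℕ → Polynomial k := fun j =>
    X ^ (Fintype.card k - 1) *
      (X ^ Fintype.card k - X) ^ ((j + 1) * (Fintype.card k - 1) - 1) with hv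
  have hker : ∀ m : ℕ, Vspan k ≤ LinearMap.ker (ell (k := k) m) := by
    intro m
    rw [Vspan, Submodule.span_le]
    rintro p ⟨s, a, b, ha, rfl⟩
    exact ell_gen m s a b ha
  have hLI : LinearIndependent k (fun m : ℕ =>
      Submodule.Quotient.mk (p := Vspan k) (v m)) := by
    rw [linearIndependent_iff']
    intro s g hsum m hm
    have hmem : (∑ i ∈ s, g i • v i) ∈ Vspan k := by
      rw [← Submodule.Quotient.mk_eq_zero,
        show (Submodule.Quotient.mk (∑ i ∈ s, g i • v i) : Polynomial k ⧸ Vspan k)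
          = (Vspan k).mkQ (∑ i ∈ s, g i • v i) from rfl, map_sum]
      simp only [map_smul, Submodule.mkQ_apply]
      exact hsum
    have h0 := hker m hmem
    rw [LinearMap.mem_ker, map_sum] at h0
    have heval : ∀ i ∈ s, ell (k := k) m (g i • v i) = if i = m then g i else 0 := by
      intro i _
      rw [map_smul, smul_eq_mul]
      simp only [hv]
      rw [ell_basis m i]
      split <;> simp
    rw [Finset.sum_congr rfl heval, Finset.sum_ite_eq' s m (fun i => g i)] at h0
    simpa [hm] using h0
  refine ⟨hLI, ?_⟩
  intro hfin
  exact Module.Finite.not_linearIndependent_of_infinite _ hLI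
end

section
/- Let k = F_2 be the field with two elements and let V ⊆ k[x] be the k-linear subspace spanned by the set {s(x) − a·s(ax+b) : s ∈ k[x], a ∈ k^*, b ∈ k} (over F_2, this is the span of {s(x) + s(x+1) : s ∈ F_2[x]}). Then V = {p(x² + x) : p ∈ F_2[y]}, i.e. V equals the subalgebra F_2[x(x+1)] of F_2[x]. In particular, x ∉ V. -/
open Polynomial

lemma two_eq_zero' : (2 : Polynomial (ZMod 2)) = 0 := CharTwo.two_eq_zero

noncomputable def pseq : ℕ → Polynomial (ZMod 2)
  | 0 => 0
  | 1 => 1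
  | (n+2) => pseq (n+1) + X * pseq n

lemma pseq_key : ∀ n : ℕ, (X : Polynomial (ZMod 2))^n + (X+1)^n = (pseq n).comp (X^2+X)
  | 0 => by
      simp only [pseq, pow_zero, zero_comp]
      linear_combination two_eq_zero'
  | 1 => by
      simp only [pseq, one_comp, pow_one]
      linear_combination X * two_eq_zero'
  | (n+2) => by
      have h1 := pseq_key (n+1)
      have h2 := pseq_key n
      simp only [pseq, add_comp, mul_comp, X_comp]
      rw [← h1, ← h2]
      linear_combination (-(X^(n+1))) * two_eq_zero'

noncomputable def compL : Polynomial (ZMod 2) →ₗ[ZMod 2] Polynomial (ZMod 2) where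
  toFun q := q.comp (X^2+X)
  map_add' p q := add_comp
  map_smul' c p := smul_comp c p _

lemma gen_mem (s : Polynomial (ZMod 2)) :
    s - s.comp (X + 1) ∈ LinearMap.range compL := by
  induction s using Polynomial.induction_on' with
  | add p q hp hq =>
      have : (p + q) - (p + q).comp (X + 1) =
          (p - p.comp (X + 1)) + (q - q.comp (X + 1)) := by
        rw [add_comp]; ring
      rw [this]; exact add_mem hp hq
  | monomial n a =>
      refine ⟨C a * pseq n, ?_⟩
      show (C a * pseq n).comp (X^2+X) = _
      rw [mul_comp, C_comp, ← pseq_key n, ← C_mul_X_pow_eq_monomial, mul_comp, C_comp, X_pow_comp]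
      rw [CharTwo.sub_eq_add]
      ring

lemma Vspan_eq : Vspan (ZMod 2) = LinearMap.range compL := by
  apply le_antisymm
  · rw [Vspan, Submodule.span_le]
    rintro p ⟨s, a, b, ha, rfl⟩
    have ha1 : a = 1 := by revert ha; revert a; decide
    have hb : b = 0 ∨ b = 1 := by revert b; decide
    subst ha1
    rcases hb with rfl | rfl
    · simp
    · have : s - C (1:ZMod 2) * s.comp (C 1 * X + C 1) = s - s.comp (X + 1) := by
        rw [C_1]; ring_nf
      rw [this]
      exact gen_mem s
  · rintro p ⟨q, rfl⟩
    apply Submodule.subset_span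
    refine ⟨X * q.comp (X^2+X), 1, 1, one_ne_zero, ?_⟩
    have hcomp : ((X:Polynomial (ZMod 2))^2+X).comp (X + 1) = X^2 + X := by
      rw [add_comp, pow_comp, X_comp]
      linear_combination ((X:Polynomial (ZMod 2)) + 1) * two_eq_zero'
    show compL q = _
    show q.comp (X^2+X) = _
    rw [C_1, one_mul, one_mul, mul_comp, X_comp, comp_assoc, hcomp]
    linear_combination (q.comp ((X:Polynomial (ZMod 2))^2+X)) * two_eq_zero'

open Polynomial in
/-- **Lemma.**  For `k = 𝔽₂`, the span `V` of the polynomials `s(x) + s(x+1)` equals the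
subalgebra `𝔽₂[x(x+1)] = {p(x²+x)}` of `𝔽₂[x]`; in particular `x ∉ V`. -/
theorem Vspan_F2_eq_comp_range :
    ((Vspan (ZMod 2) : Submodule (ZMod 2) (Polynomial (ZMod 2))) : Set (Polynomial (ZMod 2)))
        = Set.range (fun q : Polynomial (ZMod 2) => q.comp (X ^ 2 + X)) ∧
      (X : Polynomial (ZMod 2)) ∉ Vspan (ZMod 2) := by
  constructor
  · rw [Vspan_eq, LinearMap.coe_range]
    rfl
  · rw [Vspan_eq]
    rintro ⟨q, hq⟩
    have hq' : q.comp (X^2+X) = X := hq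
    have e0 := congrArg (eval 0) hq'
    have e1 := congrArg (eval 1) hq'
    simp [eval_comp] at e0 e1
    have : ((1:ZMod 2) + 1) = 0 := rfl
    rw [this] at e1
    rw [e0] at e1
    exact one_ne_zero e1.symm
end
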